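/- arXiv:2105.14964 — 2 statements merged into one kernel-verified Lean document; each statement's English description precedes it below -/
import Mathlib

section
/- Let X and W be independent complex-valued random variables with E[|X|²] ≤ P₁, E[|W|²] ≤ P₂, E[|X|⁴] ≤ 4·P₁², E[|W|⁴] ≤ 4·P₂² (all these moments integrable), let g_x, g_w ∈ ℂ with Re(g_x) ≥ 0 and Re(g_w) ≥ 0, and let N_x, N_w be complex random variables, with (X, W, N_x, N_w) mutually independent, each of N_x, N_w having real and imaginary parts of mean zero and variance σ². Define Ỹ = X + g_x·|W|²·X + N_x and Z̃ = W + g_w·|X|²·W + N_w. Then Var(Re Ỹ) + Var(Im Ỹ) + Var(Re Z̃) + Var(Im Z̃) ≤ 4σ² + (1 + 2·Re(g_x)·P₂ + 4·|g_x|²·P₂²)·P₁ + (1 + 2·Re(g_w)·P₁ + 4·|g_w|²·P₁²)·P₂. -/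
open MeasureTheory ProbabilityTheory

lemma variance_congr' {Ω : Type*} [MeasurableSpace Ω] {μ : Measure Ω} {f g : Ω → ℝ}
    (h : f =ᵐ[μ] g) : variance f μ = variance g μ := by
  unfold ProbabilityTheory.variance ProbabilityTheory.evariance
  rw [integral_congr_ae h]
  congr 1
  refine lintegral_congr_ae (h.mono fun ω hω => ?_)
  simp [hω]

lemma iIndepFun_congr_ae' {Ω ι : Type*} [MeasurableSpace Ω] {μ : Measure Ω} {β : ι → Type*}
    [m : ∀ i, MeasurableSpace (β i)] {f f' : ∀ i, Ω → β i}
    (hf : iIndepFun f μ) (h : ∀ i, f i =ᵐ[μ] f' i) : iIndepFun f' μ := by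
  rw [iIndepFun_iff_measure_inter_preimage_eq_mul] at hf ⊢
  intro S sets hsets
  have h1 : ∀ i ∈ S, μ (f' i ⁻¹' sets i) = μ (f i ⁻¹' sets i) := by
    intro i _
    refine measure_congr (Filter.eventuallyEq_set.mpr ((h i).mono fun ω hω => ?_))
    simp [Set.mem_preimage, hω]
  have hae : ∀ᵐ ω ∂μ, ∀ i ∈ S, f i ω = f' i ω :=
    (MeasureTheory.ae_ball_iff S.countable_toSet).2 fun i _ => h i
  have h2 : μ (⋂ i ∈ S, f' i ⁻¹' sets i) = μ (⋂ i ∈ S, f i ⁻¹' sets i) := by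
    refine measure_congr (Filter.eventuallyEq_set.mpr (hae.mono fun ω hω => ?_))
    simp only [Set.mem_iInter, Set.mem_preimage]
    exact ⟨fun hh i hi => (hω i hi) ▸ hh i hi, fun hh i hi => (hω i hi).symm ▸ hh i hi⟩
  rw [h2, hf S hsets]
  exact (Finset.prod_congr rfl h1).symm

lemma abs_one_add_mul_sq (g : ℂ) (a : ℝ) :
    ‖1 + g * (a : ℂ) ^ 2‖ ^ 2 =
      1 + 2 * g.re * a ^ 2 + ‖g‖ ^ 2 * a ^ 4 := by
  rw [Complex.sq_norm, Complex.sq_norm]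
  simp only [Complex.normSq_apply, Complex.add_re, Complex.add_im, Complex.mul_re,
    Complex.mul_im, Complex.one_re, Complex.one_im, ← Complex.ofReal_pow,
    Complex.ofReal_re, Complex.ofReal_im]
  ring

lemma one_user_aux {Ω : Type*} [MeasureSpace Ω] [IsProbabilityMeasure (ℙ : Measure Ω)]
    (X W N : Ω → ℂ) (g : ℂ) (P₁ P₂ σ : ℝ)
    (hXm : AEMeasurable X ℙ) (hWm : AEMeasurable W ℙ)
    (hXW : IndepFun X W ℙ)
    (hPN : IndepFun (fun ω => (X ω, W ω)) N ℙ)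
    (hX2 : Integrable (fun ω => ‖X ω‖ ^ 2) ℙ)
    (hW2 : Integrable (fun ω => ‖W ω‖ ^ 2) ℙ)
    (hW4 : Integrable (fun ω => ‖W ω‖ ^ 4) ℙ)
    (hP1 : (∫ ω, ‖X ω‖ ^ 2) ≤ P₁)
    (hP2 : (∫ ω, ‖W ω‖ ^ 2) ≤ P₂)
    (hP2' : (∫ ω, ‖W ω‖ ^ 4) ≤ 4 * P₂ ^ 2)
    (hg : 0 ≤ g.re)
    (hNre : MemLp (fun ω => (N ω).re) 2 ℙ) (hNim : MemLp (fun ω => (N ω).im) 2 ℙ)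
    (hvre : variance (fun ω => (N ω).re) ℙ = σ ^ 2)
    (hvim : variance (fun ω => (N ω).im) ℙ = σ ^ 2)
    (Y : Ω → ℂ)
    (hY : ∀ᵐ ω ∂(ℙ : Measure Ω),
      Y ω = X ω + g * (‖W ω‖ : ℂ) ^ 2 * X ω + N ω) :
    variance (fun ω => (Y ω).re) ℙ + variance (fun ω => (Y ω).im) ℙ ≤
      2 * σ ^ 2 + (1 + 2 * g.re * P₂ + 4 * ‖g‖ ^ 2 * P₂ ^ 2) * P₁ := by
  classical
  set S : Ω → ℂ := fun ω => (1 + g * (‖W ω‖ : ℂ) ^ 2) * X ω with hSdef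
  have habs : Measurable (fun z : ℂ => ‖z‖) := by
    exact measurable_norm
  have hSm : AEMeasurable S ℙ := by
    refine AEMeasurable.mul ?_ hXm
    exact (aemeasurable_const.add (aemeasurable_const.mul
      ((Complex.measurable_ofReal.comp_aemeasurable (habs.comp_aemeasurable hWm)).pow_const 2)))
  have hSsq : ∀ ω, ‖S ω‖ ^ 2 =
      ‖X ω‖ ^ 2 + 2 * g.re * (‖W ω‖ ^ 2 * ‖X ω‖ ^ 2)
        + ‖g‖ ^ 2 * (‖W ω‖ ^ 4 * ‖X ω‖ ^ 2) := by
    intro ω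
    rw [hSdef]
    simp only [norm_mul, mul_pow, abs_one_add_mul_sq]
    ring
  have hmsq : Measurable (fun z : ℂ => ‖z‖ ^ 2) := habs.pow_const 2
  have hm4 : Measurable (fun z : ℂ => ‖z‖ ^ 4) := habs.pow_const 4
  have hWX2 : IndepFun (fun ω => ‖W ω‖ ^ 2) (fun ω => ‖X ω‖ ^ 2) ℙ :=
    hXW.symm.comp hmsq hmsq
  have hWX4 : IndepFun (fun ω => ‖W ω‖ ^ 4) (fun ω => ‖X ω‖ ^ 2) ℙ :=
    hXW.symm.comp hm4 hmsq
  have hI2 : Integrable (fun ω => ‖W ω‖ ^ 2 * ‖X ω‖ ^ 2) ℙ :=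
    hWX2.integrable_mul hW2 hX2
  have hI4 : Integrable (fun ω => ‖W ω‖ ^ 4 * ‖X ω‖ ^ 2) ℙ :=
    hWX4.integrable_mul hW4 hX2
  have hIS : Integrable (fun ω => ‖S ω‖ ^ 2) ℙ := by
    have : Integrable (fun ω => ‖X ω‖ ^ 2
        + 2 * g.re * (‖W ω‖ ^ 2 * ‖X ω‖ ^ 2)
        + ‖g‖ ^ 2 * (‖W ω‖ ^ 4 * ‖X ω‖ ^ 2)) ℙ :=
      (hX2.add (hI2.const_mul _)).add (hI4.const_mul _)
    exact this.congr (Filter.Eventually.of_forall fun ω => (hSsq ω).symm)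
  have hReSm : AEMeasurable (fun ω => (S ω).re) ℙ := Complex.measurable_re.comp_aemeasurable hSm
  have hImSm : AEMeasurable (fun ω => (S ω).im) ℙ := Complex.measurable_im.comp_aemeasurable hSm
  have hIRe : Integrable (fun ω => (S ω).re ^ 2) ℙ := by
    refine hIS.mono ((hReSm.pow_const 2).aestronglyMeasurable) ?_
    refine Filter.Eventually.of_forall fun ω => ?_
    simp only [Real.norm_eq_abs, abs_pow, _root_.sq_abs]
    calc (S ω).re ^ 2 = |(S ω).re| ^ 2 := (sq_abs _).symm
      _ ≤ ‖S ω‖ ^ 2 :=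
          pow_le_pow_left₀ (abs_nonneg _) (Complex.abs_re_le_norm _) 2
  have hIIm : Integrable (fun ω => (S ω).im ^ 2) ℙ := by
    refine hIS.mono ((hImSm.pow_const 2).aestronglyMeasurable) ?_
    refine Filter.Eventually.of_forall fun ω => ?_
    simp only [Real.norm_eq_abs, abs_pow, _root_.sq_abs]
    calc (S ω).im ^ 2 = |(S ω).im| ^ 2 := (sq_abs _).symm
      _ ≤ ‖S ω‖ ^ 2 :=
          pow_le_pow_left₀ (abs_nonneg _) (Complex.abs_im_le_norm _) 2
  have hReS2 : MemLp (fun ω => (S ω).re) 2 ℙ :=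
    (memLp_two_iff_integrable_sq hReSm.aestronglyMeasurable).2 hIRe
  have hImS2 : MemLp (fun ω => (S ω).im) 2 ℙ :=
    (memLp_two_iff_integrable_sq hImSm.aestronglyMeasurable).2 hIIm
  have hReInd : IndepFun (fun ω => (S ω).re) (fun ω => (N ω).re) ℙ := by
    have hφ : Measurable (fun p : ℂ × ℂ =>
        ((1 + g * (‖p.2‖ : ℂ) ^ 2) * p.1).re) := by fun_prop
    exact hPN.comp hφ Complex.measurable_re
  have hImInd : IndepFun (fun ω => (S ω).im) (fun ω => (N ω).im) ℙ := by
    have hφ : Measurable (fun p : ℂ × ℂ =>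
        ((1 + g * (‖p.2‖ : ℂ) ^ 2) * p.1).im) := by fun_prop
    exact hPN.comp hφ Complex.measurable_im
  have hYre : variance (fun ω => (Y ω).re) ℙ
      = variance (fun ω => (S ω).re) ℙ + σ ^ 2 := by
    rw [← hvre, ← hReInd.variance_add hReS2 hNre]
    refine variance_congr' (hY.mono fun ω hω => ?_)
    show (Y ω).re = (S ω).re + (N ω).re
    rw [hω, show X ω + g * (‖W ω‖ : ℂ) ^ 2 * X ω + N ω
        = (1 + g * (‖W ω‖ : ℂ) ^ 2) * X ω + N ω by ring]
    exact Complex.add_re _ _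
  have hYim : variance (fun ω => (Y ω).im) ℙ
      = variance (fun ω => (S ω).im) ℙ + σ ^ 2 := by
    rw [← hvim, ← hImInd.variance_add hImS2 hNim]
    refine variance_congr' (hY.mono fun ω hω => ?_)
    show (Y ω).im = (S ω).im + (N ω).im
    rw [hω, show X ω + g * (‖W ω‖ : ℂ) ^ 2 * X ω + N ω
        = (1 + g * (‖W ω‖ : ℂ) ^ 2) * X ω + N ω by ring]
    exact Complex.add_im _ _
  have hvarRe : variance (fun ω => (S ω).re) ℙ ≤ ∫ ω, (S ω).re ^ 2 :=
    variance_le_expectation_sq hReSm.aestronglyMeasurable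
  have hvarIm : variance (fun ω => (S ω).im) ℙ ≤ ∫ ω, (S ω).im ^ 2 :=
    variance_le_expectation_sq hImSm.aestronglyMeasurable
  have hsum : (∫ ω, (S ω).re ^ 2) + (∫ ω, (S ω).im ^ 2) = ∫ ω, ‖S ω‖ ^ 2 := by
    rw [← integral_add hIRe hIIm]
    refine integral_congr_ae (Filter.Eventually.of_forall fun ω => ?_)
    show (S ω).re ^ 2 + (S ω).im ^ 2 = ‖S ω‖ ^ 2
    rw [Complex.sq_norm, Complex.normSq_apply]
    ring
  have hmul2 : (∫ ω, ‖W ω‖ ^ 2 * ‖X ω‖ ^ 2)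
      = (∫ ω, ‖W ω‖ ^ 2) * (∫ ω, ‖X ω‖ ^ 2) :=
    hWX2.integral_mul_eq_mul_integral hW2.aestronglyMeasurable hX2.aestronglyMeasurable
  have hmul4 : (∫ ω, ‖W ω‖ ^ 4 * ‖X ω‖ ^ 2)
      = (∫ ω, ‖W ω‖ ^ 4) * (∫ ω, ‖X ω‖ ^ 2) :=
    hWX4.integral_mul_eq_mul_integral hW4.aestronglyMeasurable hX2.aestronglyMeasurable
  have hES : (∫ ω, ‖S ω‖ ^ 2)
      = (∫ ω, ‖X ω‖ ^ 2)
        + 2 * g.re * ((∫ ω, ‖W ω‖ ^ 2) * (∫ ω, ‖X ω‖ ^ 2))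
        + ‖g‖ ^ 2 * ((∫ ω, ‖W ω‖ ^ 4) * (∫ ω, ‖X ω‖ ^ 2)) := by
    have hAB : Integrable (fun ω => ‖X ω‖ ^ 2
        + 2 * g.re * (‖W ω‖ ^ 2 * ‖X ω‖ ^ 2)) ℙ :=
      hX2.add (hI2.const_mul _)
    rw [integral_congr_ae (Filter.Eventually.of_forall hSsq),
      integral_add hAB (hI4.const_mul _), integral_add hX2 (hI2.const_mul _),
      integral_const_mul, integral_const_mul, hmul2, hmul4]
  have ha : (0:ℝ) ≤ ∫ ω, ‖X ω‖ ^ 2 := integral_nonneg fun ω => by positivity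
  have hb : (0:ℝ) ≤ ∫ ω, ‖W ω‖ ^ 2 := integral_nonneg fun ω => by positivity
  have hc : (0:ℝ) ≤ ∫ ω, ‖W ω‖ ^ 4 := integral_nonneg fun ω => by positivity
  have hP2nn : (0:ℝ) ≤ P₂ := le_trans hb hP2
  have hgabs : (0:ℝ) ≤ ‖g‖ ^ 2 := by positivity
  have hB : (∫ ω, ‖W ω‖ ^ 2) * (∫ ω, ‖X ω‖ ^ 2) ≤ P₂ * P₁ :=
    mul_le_mul hP2 hP1 ha hP2nn
  have hC : (∫ ω, ‖W ω‖ ^ 4) * (∫ ω, ‖X ω‖ ^ 2)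
      ≤ 4 * P₂ ^ 2 * P₁ := mul_le_mul hP2' hP1 ha (by positivity)
  have hfin : (∫ ω, ‖S ω‖ ^ 2)
      ≤ (1 + 2 * g.re * P₂ + 4 * ‖g‖ ^ 2 * P₂ ^ 2) * P₁ := by
    rw [hES]
    nlinarith [mul_le_mul_of_nonneg_left hB (by linarith : (0:ℝ) ≤ 2 * g.re),
      mul_le_mul_of_nonneg_left hC hgabs]
  linarith

/-- Trace (sum-of-variances) bound, equation (conv6), for the two-user memoryless
perturbative XPM interference channel `Ỹ = X + gₓ·|W|²·X + Nₓ`,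
`Z̃ = W + g_w·|X|²·W + N_w`. -/
theorem sum_var_two_user_le
    {Ω : Type*} [MeasureSpace Ω] [IsProbabilityMeasure (ℙ : Measure Ω)]
    (X W Nx Nw : Ω → ℂ) (gx gw : ℂ) (P₁ P₂ σ : ℝ)
    (hXm : AEMeasurable X ℙ) (hWm : AEMeasurable W ℙ)
    (hNxm : AEMeasurable Nx ℙ) (hNwm : AEMeasurable Nw ℙ)
    (hindep : iIndepFun ![X, W, Nx, Nw] ℙ)
    (hX2 : Integrable (fun ω => ‖X ω‖ ^ 2) ℙ)
    (hW2 : Integrable (fun ω => ‖W ω‖ ^ 2) ℙ)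
    (hX4 : Integrable (fun ω => ‖X ω‖ ^ 4) ℙ)
    (hW4 : Integrable (fun ω => ‖W ω‖ ^ 4) ℙ)
    (hP1 : (∫ ω, ‖X ω‖ ^ 2) ≤ P₁)
    (hP2 : (∫ ω, ‖W ω‖ ^ 2) ≤ P₂)
    (hP1' : (∫ ω, ‖X ω‖ ^ 4) ≤ 4 * P₁ ^ 2)
    (hP2' : (∫ ω, ‖W ω‖ ^ 4) ≤ 4 * P₂ ^ 2)
    (hgx : 0 ≤ gx.re) (hgw : 0 ≤ gw.re)
    (hNxre : MemLp (fun ω => (Nx ω).re) 2 ℙ) (hNxim : MemLp (fun ω => (Nx ω).im) 2 ℙ)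
    (hNwre : MemLp (fun ω => (Nw ω).re) 2 ℙ) (hNwim : MemLp (fun ω => (Nw ω).im) 2 ℙ)
    (hmxre : (∫ ω, (Nx ω).re) = 0) (hmxim : (∫ ω, (Nx ω).im) = 0)
    (hmwre : (∫ ω, (Nw ω).re) = 0) (hmwim : (∫ ω, (Nw ω).im) = 0)
    (hvxre : variance (fun ω => (Nx ω).re) ℙ = σ ^ 2)
    (hvxim : variance (fun ω => (Nx ω).im) ℙ = σ ^ 2)
    (hvwre : variance (fun ω => (Nw ω).re) ℙ = σ ^ 2)
    (hvwim : variance (fun ω => (Nw ω).im) ℙ = σ ^ 2)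
    (Y Z : Ω → ℂ)
    (hY : ∀ ω, Y ω = X ω + gx * (‖W ω‖ : ℂ) ^ 2 * X ω + Nx ω)
    (hZ : ∀ ω, Z ω = W ω + gw * (‖X ω‖ : ℂ) ^ 2 * W ω + Nw ω) :
    variance (fun ω => (Y ω).re) ℙ + variance (fun ω => (Y ω).im) ℙ +
        variance (fun ω => (Z ω).re) ℙ + variance (fun ω => (Z ω).im) ℙ ≤
      4 * σ ^ 2 +
        (1 + 2 * gx.re * P₂ + 4 * ‖gx‖ ^ 2 * P₂ ^ 2) * P₁ +
        (1 + 2 * gw.re * P₁ + 4 * ‖gw‖ ^ 2 * P₁ ^ 2) * P₂ := by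
  classical
  set X' := hXm.mk X with hX'def
  set W' := hWm.mk W with hW'def
  set Nx' := hNxm.mk Nx with hNx'def
  set Nw' := hNwm.mk Nw with hNw'def
  have hmeas : ∀ i, Measurable (![X', W', Nx', Nw'] i) := by
    intro i
    fin_cases i
    · exact hXm.measurable_mk
    · exact hWm.measurable_mk
    · exact hNxm.measurable_mk
    · exact hNwm.measurable_mk
  have hae : ∀ i, ![X, W, Nx, Nw] i =ᵐ[ℙ] ![X', W', Nx', Nw'] i := by
    intro i
    fin_cases i
    · exact hXm.ae_eq_mk
    · exact hWm.ae_eq_mk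
    · exact hNxm.ae_eq_mk
    · exact hNwm.ae_eq_mk
  have hindep' : iIndepFun ![X', W', Nx', Nw'] ℙ :=
    iIndepFun_congr_ae' hindep hae
  -- independence of X and W
  have hXW : IndepFun X W ℙ := by
    have h := hindep'.indepFun (show (0 : Fin 4) ≠ 1 by decide)
    simp only [Matrix.cons_val_zero, Matrix.cons_val_one, Matrix.head_cons] at h
    exact h.congr hXm.ae_eq_mk.symm hWm.ae_eq_mk.symm
  -- independence of (X, W) and Nx
  have hPNx : IndepFun (fun ω => (X ω, W ω)) Nx ℙ := by
    have h := hindep'.indepFun_prodMk hmeas 0 1 2 (by decide) (by decide)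
    simp only [Matrix.cons_val_zero, Matrix.cons_val_one, Matrix.head_cons,
      Matrix.cons_val_two, Matrix.tail_cons] at h
    refine h.congr ?_ hNxm.ae_eq_mk.symm
    filter_upwards [hXm.ae_eq_mk, hWm.ae_eq_mk] with ω h1 h2
    rw [hX'def, hW'def, ← h1, ← h2]
  -- independence of (W, X) and Nw
  have hPNw : IndepFun (fun ω => (W ω, X ω)) Nw ℙ := by
    have h := hindep'.indepFun_prodMk hmeas 1 0 3 (by decide) (by decide)
    simp only [Matrix.cons_val_zero, Matrix.cons_val_one, Matrix.head_cons,
      Matrix.cons_val_three, Matrix.tail_cons] at h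
    refine h.congr ?_ hNwm.ae_eq_mk.symm
    filter_upwards [hXm.ae_eq_mk, hWm.ae_eq_mk] with ω h1 h2
    rw [hX'def, hW'def, ← h1, ← h2]
  have hbound1 := one_user_aux X W Nx gx P₁ P₂ σ hXm hWm hXW hPNx hX2 hW2 hW4
    hP1 hP2 hP2' hgx hNxre hNxim hvxre hvxim Y (Filter.Eventually.of_forall hY)
  have hbound2 := one_user_aux W X Nw gw P₂ P₁ σ hWm hXm hXW.symm hPNw hW2 hX2 hX4
    hP2 hP1 hP1' hgw hNwre hNwim hvwre hvwim Z (Filter.Eventually.of_forall hZ)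
  linarith
end

section
/- Under the same assumptions (X, W independent complex random variables with E[|X|²] ≤ P₁, E[|W|²] ≤ P₂, E[|X|⁴] ≤ 4·P₁², E[|W|⁴] ≤ 4·P₂²; g_x, g_w ∈ ℂ with Re(g_x) ≥ 0, Re(g_w) ≥ 0; N_x, N_w complex noises with (X,W,N_x,N_w) mutually independent and each noise having zero-mean real and imaginary parts of variance σ²; Ỹ = X + g_x·|W|²·X + N_x, Z̃ = W + g_w·|X|²·W + N_w), the determinant of the 4×4 covariance matrix of (Re Ỹ, Im Ỹ, Re Z̃, Im Z̃) satisfies det(cov) ≤ ( σ² + (1/4)·[ (1 + 2·Re(g_x)·P₂ + 4·|g_x|²·P₂²)·P₁ + (1 + 2·Re(g_w)·P₁ + 4·|g_w|²·P₁²)·P₂ ] )⁴. -/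
open MeasureTheory ProbabilityTheory


lemma iIndepFun_of_ae_eq {Ω ι : Type*} {_ : MeasurableSpace Ω} {μ : Measure Ω}
    {β : ι → Type*} {m : ∀ i, MeasurableSpace (β i)} {f g : ∀ i, Ω → β i}
    (hf : iIndepFun (m := m) f μ) (h : ∀ i, f i =ᵐ[μ] g i) : iIndepFun (m := m) g μ := by
  rw [iIndepFun_iff_measure_inter_preimage_eq_mul] at hf ⊢
  intro S sets hmeas
  have hae : ∀ᵐ ω ∂μ, ∀ i ∈ S, f i ω = g i ω :=
    (Filter.eventually_all_finset S).2 fun i _ => h i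
  have h1 : ((⋂ i ∈ S, g i ⁻¹' sets i) : Set Ω) =ᵐ[μ] ((⋂ i ∈ S, f i ⁻¹' sets i) : Set Ω) := by
    filter_upwards [hae] with ω hω
    show (ω ∈ ⋂ i ∈ S, g i ⁻¹' sets i) = (ω ∈ ⋂ i ∈ S, f i ⁻¹' sets i)
    simp only [Set.mem_iInter, Set.mem_preimage, eq_iff_iff]
    exact ⟨fun h' j hj => by rw [hω j hj]; exact h' j hj,
      fun h' j hj => by rw [← hω j hj]; exact h' j hj⟩
  rw [measure_congr h1, hf S hmeas]
  refine Finset.prod_congr rfl fun i hi => ?_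
  refine measure_congr ?_
  filter_upwards [h i] with ω hω
  show (f i ω ∈ sets i) = (g i ω ∈ sets i)
  rw [hω]

lemma integrable_mul_of_memL2 {Ω : Type*} {_ : MeasurableSpace Ω} {μ : Measure Ω}
    {u v : Ω → ℝ} (hu : MemLp u 2 μ) (hv : MemLp v 2 μ) :
    Integrable (fun ω => u ω * v ω) μ := by
  have hu2 : Integrable (fun ω => u ω ^ 2) μ := hu.integrable_sq
  have hv2 : Integrable (fun ω => v ω ^ 2) μ := hv.integrable_sq
  refine Integrable.mono' ((hu2.add hv2).div_const 2)
    (hu.aestronglyMeasurable.mul hv.aestronglyMeasurable) (Filter.Eventually.of_forall fun ω => ?_)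
  simp only [Real.norm_eq_abs, abs_mul, Pi.add_apply]
  nlinarith [sq_nonneg (|u ω| - |v ω|), sq_abs (u ω), sq_abs (v ω), abs_nonneg (u ω), abs_nonneg (v ω)]

lemma amgm4 {a b c d : ℝ} (ha : 0 ≤ a) (hb : 0 ≤ b) (hc : 0 ≤ c) (hd : 0 ≤ d) :
    a * b * c * d ≤ ((a + b + c + d) / 4) ^ 4 := by
  have h1 : a * b ≤ ((a + b) / 2) ^ 2 := by nlinarith [sq_nonneg (a - b)]
  have h2 : c * d ≤ ((c + d) / 2) ^ 2 := by nlinarith [sq_nonneg (c - d)]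
  have h3 : a * b * (c * d) ≤ ((a + b) / 2) ^ 2 * ((c + d) / 2) ^ 2 := by
    apply mul_le_mul h1 h2 (mul_nonneg hc hd) (by positivity)
  have h4 : ((a + b) / 2) * ((c + d) / 2) ≤ ((a + b + c + d) / 4) ^ 2 := by
    nlinarith [sq_nonneg ((a + b) / 2 - (c + d) / 2)]
  calc a * b * c * d = a * b * (c * d) := by ring
    _ ≤ ((a + b) / 2) ^ 2 * ((c + d) / 2) ^ 2 := h3
    _ = (((a + b) / 2) * ((c + d) / 2)) ^ 2 := by ring
    _ ≤ (((a + b + c + d) / 4) ^ 2) ^ 2 := by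
        apply pow_le_pow_left₀ (by positivity) h4
    _ = ((a + b + c + d) / 4) ^ 4 := by ring

lemma trace_eq_sum_eigen {A : Matrix (Fin 4) (Fin 4) ℝ} (hA : A.IsHermitian) :
    A.trace = ∑ i, hA.eigenvalues i := by
  simpa using hA.trace_eq_sum_eigenvalues


lemma channel_bound {Ω : Type*} [MeasureSpace Ω] [IsProbabilityMeasure (ℙ : Measure Ω)]
    (X W N : Ω → ℂ) (g : ℂ) (P Q σ : ℝ)
    (hXm : AEMeasurable X ℙ) (hWm : AEMeasurable W ℙ)
    (hiXW : IndepFun X W ℙ)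
    (hiPN : IndepFun (fun ω => (X ω, W ω)) N ℙ)
    (hX2 : Integrable (fun ω => ‖X ω‖ ^ 2) ℙ)
    (hW2 : Integrable (fun ω => ‖W ω‖ ^ 2) ℙ)
    (hW4 : Integrable (fun ω => ‖W ω‖ ^ 4) ℙ)
    (hP : (∫ ω, ‖X ω‖ ^ 2) ≤ P)
    (hQ : (∫ ω, ‖W ω‖ ^ 2) ≤ Q)
    (hQ4 : (∫ ω, ‖W ω‖ ^ 4) ≤ 4 * Q ^ 2)
    (hg : 0 ≤ g.re)
    (hNre : MemLp (fun ω => (N ω).re) 2 ℙ) (hNim : MemLp (fun ω => (N ω).im) 2 ℙ)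
    (hvre : variance (fun ω => (N ω).re) ℙ = σ ^ 2)
    (hvim : variance (fun ω => (N ω).im) ℙ = σ ^ 2)
    (Y : Ω → ℂ)
    (hY : ∀ ω, Y ω = X ω + g * (‖W ω‖ : ℂ) ^ 2 * X ω + N ω) :
    MemLp (fun ω => (Y ω).re) 2 ℙ ∧ MemLp (fun ω => (Y ω).im) 2 ℙ ∧
    variance (fun ω => (Y ω).re) ℙ + variance (fun ω => (Y ω).im) ℙ ≤
      2 * σ ^ 2 + (1 + 2 * g.re * Q + 4 * ‖g‖ ^ 2 * Q ^ 2) * P := by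
  set S : Ω → ℂ := fun ω => X ω + g * (‖W ω‖ : ℂ) ^ 2 * X ω with hS
  -- pointwise identity for |S|²
  have hSsq : ∀ ω, (S ω).re ^ 2 + (S ω).im ^ 2 =
      ‖X ω‖ ^ 2 + 2 * g.re * (‖X ω‖ ^ 2 * ‖W ω‖ ^ 2)
        + ‖g‖ ^ 2 * (‖X ω‖ ^ 2 * ‖W ω‖ ^ 4) := by
    intro ω
    have h1 : S ω = (1 + g * (‖W ω‖ : ℂ) ^ 2) * X ω := by rw [hS]; ring
    have h2 : (S ω).re ^ 2 + (S ω).im ^ 2 = Complex.normSq (S ω) := by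
      rw [Complex.normSq_apply]; ring
    rw [h2, h1, map_mul]
    have h3 : Complex.normSq (1 + g * (‖W ω‖ : ℂ) ^ 2) =
        1 + 2 * g.re * ‖W ω‖ ^ 2 + Complex.normSq g * ‖W ω‖ ^ 4 := by
      simp only [Complex.normSq_apply, Complex.add_re, Complex.add_im, Complex.one_re,
        Complex.one_im, Complex.mul_re, Complex.mul_im, ← Complex.ofReal_pow,
        Complex.ofReal_re, Complex.ofReal_im]
      ring
    rw [h3, ← Complex.sq_norm g, ← Complex.sq_norm (X ω)]
    ring
  -- measurability
  have hSm : AEMeasurable S ℙ := by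
    refine hXm.add (AEMeasurable.mul ?_ hXm)
    exact aemeasurable_const.mul
      (((Complex.measurable_ofReal.comp (continuous_norm : Continuous fun z : ℂ => ‖z‖).measurable).comp_aemeasurable hWm).pow_const 2)
  -- independence of squared moduli
  have mabs2 : Measurable fun z : ℂ => ‖z‖ ^ 2 := (continuous_norm : Continuous fun z : ℂ => ‖z‖).measurable.pow_const 2
  have mabs4 : Measurable fun z : ℂ => ‖z‖ ^ 4 := (continuous_norm : Continuous fun z : ℂ => ‖z‖).measurable.pow_const 4
  have hi22 : IndepFun (fun ω => ‖X ω‖ ^ 2) (fun ω => ‖W ω‖ ^ 2) ℙ :=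
    hiXW.comp mabs2 mabs2
  have hi24 : IndepFun (fun ω => ‖X ω‖ ^ 2) (fun ω => ‖W ω‖ ^ 4) ℙ :=
    hiXW.comp mabs2 mabs4
  have int22 : Integrable (fun ω => ‖X ω‖ ^ 2 * ‖W ω‖ ^ 2) ℙ := hi22.integrable_mul hX2 hW2
  have int24 : Integrable (fun ω => ‖X ω‖ ^ 2 * ‖W ω‖ ^ 4) ℙ := hi24.integrable_mul hX2 hW4
  have e22 : (∫ ω, ‖X ω‖ ^ 2 * ‖W ω‖ ^ 2) =
      (∫ ω, ‖X ω‖ ^ 2) * (∫ ω, ‖W ω‖ ^ 2) :=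
    hi22.integral_fun_mul_eq_mul_integral hX2.aestronglyMeasurable hW2.aestronglyMeasurable
  have e24 : (∫ ω, ‖X ω‖ ^ 2 * ‖W ω‖ ^ 4) =
      (∫ ω, ‖X ω‖ ^ 2) * (∫ ω, ‖W ω‖ ^ 4) :=
    hi24.integral_fun_mul_eq_mul_integral hX2.aestronglyMeasurable hW4.aestronglyMeasurable
  -- integrability of |S|² pieces
  have intSsq : Integrable (fun ω => (S ω).re ^ 2 + (S ω).im ^ 2) ℙ := by
    refine ((hX2.add (int22.const_mul (2 * g.re))).add (int24.const_mul (‖g‖ ^ 2))).congr ?_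
    exact Filter.Eventually.of_forall fun ω => ((hSsq ω).symm)
  have intSre2 : Integrable (fun ω => (S ω).re ^ 2) ℙ := by
    refine intSsq.mono' ((Complex.measurable_re.comp_aemeasurable hSm).pow_const
      2).aestronglyMeasurable (Filter.Eventually.of_forall fun ω => ?_)
    rw [Real.norm_eq_abs, abs_of_nonneg (sq_nonneg _)]
    nlinarith [sq_nonneg ((S ω).im)]
  have intSim2 : Integrable (fun ω => (S ω).im ^ 2) ℙ := by
    refine intSsq.mono' ((Complex.measurable_im.comp_aemeasurable hSm).pow_const
      2).aestronglyMeasurable (Filter.Eventually.of_forall fun ω => ?_)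
    rw [Real.norm_eq_abs, abs_of_nonneg (sq_nonneg _)]
    nlinarith [sq_nonneg ((S ω).re)]
  have memSre : MemLp (fun ω => (S ω).re) 2 ℙ :=
    (memLp_two_iff_integrable_sq
      (Complex.measurable_re.comp_aemeasurable hSm).aestronglyMeasurable).2 intSre2
  have memSim : MemLp (fun ω => (S ω).im) 2 ℙ :=
    (memLp_two_iff_integrable_sq
      (Complex.measurable_im.comp_aemeasurable hSm).aestronglyMeasurable).2 intSim2
  -- independence of Re S and Re N (and Im versions)
  have φc : Continuous fun p : ℂ × ℂ => p.1 + g * (‖p.2‖ : ℂ) ^ 2 * p.1 :=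
    continuous_fst.add ((continuous_const.mul ((Complex.continuous_ofReal.comp
      ((continuous_norm : Continuous fun z : ℂ => ‖z‖).comp continuous_snd)).pow 2)).mul continuous_fst)
  have hiSNre : IndepFun (fun ω => (S ω).re) (fun ω => (N ω).re) ℙ :=
    hiPN.comp (Complex.measurable_re.comp φc.measurable) Complex.measurable_re
  have hiSNim : IndepFun (fun ω => (S ω).im) (fun ω => (N ω).im) ℙ :=
    hiPN.comp (Complex.measurable_im.comp φc.measurable) Complex.measurable_im
  -- decompose Y
  have hYre : (fun ω => (Y ω).re) = (fun ω => (S ω).re) + fun ω => (N ω).re := by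
    funext ω; simp [hY ω, hS, Complex.add_re]
  have hYim : (fun ω => (Y ω).im) = (fun ω => (S ω).im) + fun ω => (N ω).im := by
    funext ω; simp [hY ω, hS, Complex.add_im]
  have memYre : MemLp (fun ω => (Y ω).re) 2 ℙ := by rw [hYre]; exact memSre.add hNre
  have memYim : MemLp (fun ω => (Y ω).im) 2 ℙ := by rw [hYim]; exact memSim.add hNim
  refine ⟨memYre, memYim, ?_⟩
  have hvarYre : variance (fun ω => (Y ω).re) ℙ
      = variance (fun ω => (S ω).re) ℙ + σ ^ 2 := by
    rw [hYre, hiSNre.variance_add memSre hNre, hvre]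
  have hvarYim : variance (fun ω => (Y ω).im) ℙ
      = variance (fun ω => (S ω).im) ℙ + σ ^ 2 := by
    rw [hYim, hiSNim.variance_add memSim hNim, hvim]
  have hvre' : variance (fun ω => (S ω).re) ℙ ≤ ∫ ω, (S ω).re ^ 2 := by
    have := variance_le_expectation_sq (μ := ℙ) memSre.aestronglyMeasurable
    simpa [Pi.pow_apply] using this
  have hvim' : variance (fun ω => (S ω).im) ℙ ≤ ∫ ω, (S ω).im ^ 2 := by
    have := variance_le_expectation_sq (μ := ℙ) memSim.aestronglyMeasurable
    simpa [Pi.pow_apply] using this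
  -- compute ∫ |S|²
  have eS : (∫ ω, ((S ω).re ^ 2 + (S ω).im ^ 2)) =
      (∫ ω, ‖X ω‖ ^ 2) * (1 + 2 * g.re * (∫ ω, ‖W ω‖ ^ 2)
        + ‖g‖ ^ 2 * (∫ ω, ‖W ω‖ ^ 4)) := by
    calc (∫ ω, ((S ω).re ^ 2 + (S ω).im ^ 2))
        = ∫ ω, (‖X ω‖ ^ 2 + 2 * g.re * (‖X ω‖ ^ 2 * ‖W ω‖ ^ 2)
            + ‖g‖ ^ 2 * (‖X ω‖ ^ 2 * ‖W ω‖ ^ 4)) :=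
          integral_congr_ae (Filter.Eventually.of_forall fun ω => hSsq ω)
      _ = (∫ ω, (‖X ω‖ ^ 2 + 2 * g.re * (‖X ω‖ ^ 2 * ‖W ω‖ ^ 2)))
            + ∫ ω, ‖g‖ ^ 2 * (‖X ω‖ ^ 2 * ‖W ω‖ ^ 4) :=
          integral_add (hX2.add (int22.const_mul _)) (int24.const_mul _)
      _ = ((∫ ω, ‖X ω‖ ^ 2) + (∫ ω, 2 * g.re * (‖X ω‖ ^ 2 * ‖W ω‖ ^ 2)))
            + ∫ ω, ‖g‖ ^ 2 * (‖X ω‖ ^ 2 * ‖W ω‖ ^ 4) := by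
          have h := integral_add (μ := (ℙ : Measure Ω)) hX2 (int22.const_mul (2 * g.re))
          exact congrArg (fun t => t + ∫ ω, ‖g‖ ^ 2 * (‖X ω‖ ^ 2 * ‖W ω‖ ^ 4)) h
      _ = (∫ ω, ‖X ω‖ ^ 2) + 2 * g.re * ((∫ ω, ‖X ω‖ ^ 2) * (∫ ω, ‖W ω‖ ^ 2))
            + ‖g‖ ^ 2 * ((∫ ω, ‖X ω‖ ^ 2) * (∫ ω, ‖W ω‖ ^ 4)) := by
          rw [integral_const_mul, integral_const_mul, e22, e24]
      _ = _ := by ring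
  have hm2x0 : 0 ≤ ∫ ω, ‖X ω‖ ^ 2 := integral_nonneg fun ω => sq_nonneg _
  have hm2w0 : 0 ≤ ∫ ω, ‖W ω‖ ^ 2 := integral_nonneg fun ω => sq_nonneg _
  have hm4w0 : 0 ≤ ∫ ω, ‖W ω‖ ^ 4 := integral_nonneg fun ω => by positivity
  have hP0 : 0 ≤ P := le_trans hm2x0 hP
  have hSbound : (∫ ω, ((S ω).re ^ 2 + (S ω).im ^ 2)) ≤
      (1 + 2 * g.re * Q + 4 * ‖g‖ ^ 2 * Q ^ 2) * P := by
    rw [eS]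
    have hbr : (1 + 2 * g.re * (∫ ω, ‖W ω‖ ^ 2) + ‖g‖ ^ 2 * (∫ ω, ‖W ω‖ ^ 4))
        ≤ (1 + 2 * g.re * Q + 4 * ‖g‖ ^ 2 * Q ^ 2) := by
      have h1 : 2 * g.re * (∫ ω, ‖W ω‖ ^ 2) ≤ 2 * g.re * Q :=
        mul_le_mul_of_nonneg_left hQ (by linarith)
      have h2 : ‖g‖ ^ 2 * (∫ ω, ‖W ω‖ ^ 4) ≤ ‖g‖ ^ 2 * (4 * Q ^ 2) :=
        mul_le_mul_of_nonneg_left hQ4 (sq_nonneg _)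
      nlinarith
    calc (∫ ω, ‖X ω‖ ^ 2) * (1 + 2 * g.re * (∫ ω, ‖W ω‖ ^ 2)
          + ‖g‖ ^ 2 * (∫ ω, ‖W ω‖ ^ 4))
        ≤ P * (1 + 2 * g.re * (∫ ω, ‖W ω‖ ^ 2) + ‖g‖ ^ 2 * (∫ ω, ‖W ω‖ ^ 4)) := by
          apply mul_le_mul_of_nonneg_right hP (by positivity)
      _ ≤ P * (1 + 2 * g.re * Q + 4 * ‖g‖ ^ 2 * Q ^ 2) :=
          mul_le_mul_of_nonneg_left hbr hP0
      _ = (1 + 2 * g.re * Q + 4 * ‖g‖ ^ 2 * Q ^ 2) * P := by ring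
  have hsum : (∫ ω, (S ω).re ^ 2) + (∫ ω, (S ω).im ^ 2)
      = ∫ ω, ((S ω).re ^ 2 + (S ω).im ^ 2) := (integral_add intSre2 intSim2).symm
  rw [hvarYre, hvarYim]
  linarith [hvre', hvim', hSbound, hsum.ge, hsum.le]


/-- Equation (conv6): determinant bound on the 4×4 covariance matrix of
`(Re Ỹ, Im Ỹ, Re Z̃, Im Z̃)` for the two-user memoryless perturbative XPM
interference channel `Ỹ = X + gₓ·|W|²·X + Nₓ`, `Z̃ = W + g_w·|X|²·W + N_w`. -/
theorem det_cov_two_user_le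
    {Ω : Type*} [MeasureSpace Ω] [IsProbabilityMeasure (ℙ : Measure Ω)]
    (X W Nx Nw : Ω → ℂ) (gx gw : ℂ) (P₁ P₂ σ : ℝ)
    (hXm : AEMeasurable X ℙ) (hWm : AEMeasurable W ℙ)
    (hNxm : AEMeasurable Nx ℙ) (hNwm : AEMeasurable Nw ℙ)
    (hindep : iIndepFun ![X, W, Nx, Nw] ℙ)
    (hX2 : Integrable (fun ω => ‖X ω‖ ^ 2) ℙ)
    (hW2 : Integrable (fun ω => ‖W ω‖ ^ 2) ℙ)
    (hX4 : Integrable (fun ω => ‖X ω‖ ^ 4) ℙ)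
    (hW4 : Integrable (fun ω => ‖W ω‖ ^ 4) ℙ)
    (hP1 : (∫ ω, ‖X ω‖ ^ 2) ≤ P₁)
    (hP2 : (∫ ω, ‖W ω‖ ^ 2) ≤ P₂)
    (hP1' : (∫ ω, ‖X ω‖ ^ 4) ≤ 4 * P₁ ^ 2)
    (hP2' : (∫ ω, ‖W ω‖ ^ 4) ≤ 4 * P₂ ^ 2)
    (hgx : 0 ≤ gx.re) (hgw : 0 ≤ gw.re)
    (hNxre : MemLp (fun ω => (Nx ω).re) 2 ℙ) (hNxim : MemLp (fun ω => (Nx ω).im) 2 ℙ)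
    (hNwre : MemLp (fun ω => (Nw ω).re) 2 ℙ) (hNwim : MemLp (fun ω => (Nw ω).im) 2 ℙ)
    (hmxre : (∫ ω, (Nx ω).re) = 0) (hmxim : (∫ ω, (Nx ω).im) = 0)
    (hmwre : (∫ ω, (Nw ω).re) = 0) (hmwim : (∫ ω, (Nw ω).im) = 0)
    (hvxre : variance (fun ω => (Nx ω).re) ℙ = σ ^ 2)
    (hvxim : variance (fun ω => (Nx ω).im) ℙ = σ ^ 2)
    (hvwre : variance (fun ω => (Nw ω).re) ℙ = σ ^ 2)
    (hvwim : variance (fun ω => (Nw ω).im) ℙ = σ ^ 2)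
    (Y Z : Ω → ℂ)
    (hY : ∀ ω, Y ω = X ω + gx * (‖W ω‖ : ℂ) ^ 2 * X ω + Nx ω)
    (hZ : ∀ ω, Z ω = W ω + gw * (‖X ω‖ : ℂ) ^ 2 * W ω + Nw ω)
    (V : Fin 4 → Ω → ℝ)
    (hV : V = ![fun ω => (Y ω).re, fun ω => (Y ω).im,
                fun ω => (Z ω).re, fun ω => (Z ω).im])
    (C : Matrix (Fin 4) (Fin 4) ℝ)
    (hC : ∀ i j, C i j = ∫ ω, (V i ω - ∫ ω', V i ω') * (V j ω - ∫ ω', V j ω')) :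
    C.det ≤
      (σ ^ 2 + (1 / 4) *
          ((1 + 2 * gx.re * P₂ + 4 * ‖gx‖ ^ 2 * P₂ ^ 2) * P₁ +
            (1 + 2 * gw.re * P₁ + 4 * ‖gw‖ ^ 2 * P₁ ^ 2) * P₂)) ^ 4 := by
  
  classical
  -- measurable modifications
  set X' := hXm.mk X with hX'def
  set W' := hWm.mk W with hW'def
  set Nx' := hNxm.mk Nx with hNx'def
  set Nw' := hNwm.mk Nw with hNw'def
  have hindep' : iIndepFun ![X', W', Nx', Nw'] ℙ := by
    refine iIndepFun_of_ae_eq hindep ?_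
    intro i
    fin_cases i
    exacts [hXm.ae_eq_mk, hWm.ae_eq_mk, hNxm.ae_eq_mk, hNwm.ae_eq_mk]
  have hmeas' : ∀ i, Measurable (![X', W', Nx', Nw'] i) := by
    intro i
    fin_cases i
    exacts [hXm.measurable_mk, hWm.measurable_mk, hNxm.measurable_mk, hNwm.measurable_mk]
  have hpairX : IndepFun (fun ω => (X' ω, W' ω)) Nx' ℙ := by
    have := hindep'.indepFun_prodMk hmeas' 0 1 2 (by decide) (by decide)
    exact this
  have hpairW : IndepFun (fun ω => (W' ω, X' ω)) Nw' ℙ := by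
    have := hindep'.indepFun_prodMk hmeas' 1 0 3 (by decide) (by decide)
    exact this
  have hiPNx : IndepFun (fun ω => (X ω, W ω)) Nx ℙ := by
    refine hpairX.congr ?_ hNxm.ae_eq_mk.symm
    filter_upwards [hXm.ae_eq_mk, hWm.ae_eq_mk] with ω h1 h2
    simp only [hX'def, hW'def, ← h1, ← h2]
  have hiPNw : IndepFun (fun ω => (W ω, X ω)) Nw ℙ := by
    refine hpairW.congr ?_ hNwm.ae_eq_mk.symm
    filter_upwards [hXm.ae_eq_mk, hWm.ae_eq_mk] with ω h1 h2
    simp only [hX'def, hW'def, ← h1, ← h2]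
  have hiXW : IndepFun X W ℙ := hindep.indepFun (show (0 : Fin 4) ≠ 1 by decide)
  -- channel bounds
  have ch1 := channel_bound X W Nx gx P₁ P₂ σ hXm hWm hiXW hiPNx hX2 hW2 hW4 hP1 hP2 hP2'
    hgx hNxre hNxim hvxre hvxim Y hY
  have ch2 := channel_bound W X Nw gw P₂ P₁ σ hWm hXm hiXW.symm hiPNw hW2 hX2 hX4 hP2 hP1 hP1'
    hgw hNwre hNwim hvwre hvwim Z hZ
  have hV0 : V 0 = fun ω => (Y ω).re := by rw [hV]; rfl
  have hV1 : V 1 = fun ω => (Y ω).im := by rw [hV]; rfl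
  have hV2 : V 2 = fun ω => (Z ω).re := by rw [hV]; rfl
  have hV3 : V 3 = fun ω => (Z ω).im := by rw [hV]; rfl
  have hVmem : ∀ i, MemLp (V i) 2 ℙ := by
    intro i
    fin_cases i
    exacts [hV0 ▸ ch1.1, hV1 ▸ ch1.2.1, hV2 ▸ ch2.1, hV3 ▸ ch2.2.1]
  set μV : Fin 4 → ℝ := fun i => ∫ ω, V i ω with hμV
  set U : Fin 4 → Ω → ℝ := fun i ω => V i ω - μV i with hU
  have hU2 : ∀ i, MemLp (U i) 2 ℙ := fun i => (hVmem i).sub (memLp_const (μV i))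
  have hUU : ∀ i j, Integrable (fun ω => U i ω * U j ω) ℙ := fun i j =>
    integrable_mul_of_memL2 (hU2 i) (hU2 j)
  have hCij : ∀ i j, C i j = ∫ ω, U i ω * U j ω := fun i j => hC i j
  -- symmetry
  have hsym : C.IsHermitian := by
    refine Matrix.IsHermitian.ext fun i j => ?_
    rw [star_trivial, hCij i j, hCij j i]
    exact integral_congr_ae (Filter.Eventually.of_forall fun ω => mul_comm _ _)
  -- positive semidefiniteness
  have hpsd : C.PosSemidef := by
    refine Matrix.PosSemidef.of_dotProduct_mulVec_nonneg hsym fun x => ?_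
    have hsx : star x = x := funext fun i => rfl
    rw [hsx]
    have e1 : ∀ ω, (∑ i, x i * U i ω) ^ 2 =
        ∑ p : Fin 4 × Fin 4, (x p.1 * x p.2) * (U p.1 ω * U p.2 ω) := by
      intro ω
      calc (∑ i, x i * U i ω) ^ 2 = ∑ i, ∑ j, (x i * U i ω) * (x j * U j ω) := by
            rw [sq, Finset.sum_mul_sum]
        _ = ∑ p : Fin 4 × Fin 4, (x p.1 * x p.2) * (U p.1 ω * U p.2 ω) := by
            rw [← Finset.univ_product_univ, Finset.sum_product]
            exact Finset.sum_congr rfl fun i _ =>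
              Finset.sum_congr rfl fun j _ => by ring
    have e2 : (∫ ω, (∑ i, x i * U i ω) ^ 2) =
        ∑ p : Fin 4 × Fin 4, (x p.1 * x p.2) * ∫ ω, U p.1 ω * U p.2 ω := by
      calc (∫ ω, (∑ i, x i * U i ω) ^ 2)
          = ∫ ω, ∑ p : Fin 4 × Fin 4, (x p.1 * x p.2) * (U p.1 ω * U p.2 ω) :=
            integral_congr_ae (Filter.Eventually.of_forall fun ω => e1 ω)
        _ = ∑ p : Fin 4 × Fin 4, ∫ ω, (x p.1 * x p.2) * (U p.1 ω * U p.2 ω) :=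
            integral_finset_sum _ fun p _ => (hUU p.1 p.2).const_mul _
        _ = ∑ p : Fin 4 × Fin 4, (x p.1 * x p.2) * ∫ ω, U p.1 ω * U p.2 ω :=
            Finset.sum_congr rfl fun p _ => integral_const_mul _ _
    have e3 : dotProduct x (C.mulVec x)
        = ∑ p : Fin 4 × Fin 4, (x p.1 * x p.2) * C p.1 p.2 := by
      rw [← Finset.univ_product_univ, Finset.sum_product]
      simp only [dotProduct, Matrix.mulVec, Finset.mul_sum]
      exact Finset.sum_congr rfl fun i _ => Finset.sum_congr rfl fun j _ => by ring
    have e4 : dotProduct x (C.mulVec x) = ∫ ω, (∑ i, x i * U i ω) ^ 2 := by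
      rw [e3, e2]
      exact Finset.sum_congr rfl fun p _ => by rw [hCij p.1 p.2]
    rw [e4]
    exact integral_nonneg fun ω => sq_nonneg _
  -- diagonal entries are variances
  have hdiag : ∀ i, C i i = variance (V i) ℙ := by
    intro i
    rw [hCij i i, variance_eq_integral (hVmem i).aemeasurable]
    refine integral_congr_ae (Filter.Eventually.of_forall fun ω => ?_)
    simp only [Pi.pow_apply, Pi.sub_apply, sq]
    rfl
  -- eigenvalue bound
  have hdet : C.det = ∏ i, hsym.eigenvalues i := by
    have := hsym.det_eq_prod_eigenvalues
    simpa using this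
  have htr : C.trace = ∑ i, hsym.eigenvalues i := trace_eq_sum_eigen hsym
  have hdet_tr : C.det ≤ (C.trace / 4) ^ 4 := by
    rw [hdet, htr, Fin.prod_univ_four, Fin.sum_univ_four]
    exact amgm4 (hpsd.eigenvalues_nonneg 0) (hpsd.eigenvalues_nonneg 1)
      (hpsd.eigenvalues_nonneg 2) (hpsd.eigenvalues_nonneg 3)
  -- trace bound
  have htr4 : C.trace = C 0 0 + C 1 1 + C 2 2 + C 3 3 := by
    rw [Matrix.trace, Fin.sum_univ_four]; rfl
  have hvar1 := ch1.2.2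
  have hvar2 := ch2.2.2
  have htrbound : C.trace ≤ 4 * σ ^ 2
      + ((1 + 2 * gx.re * P₂ + 4 * ‖gx‖ ^ 2 * P₂ ^ 2) * P₁
        + (1 + 2 * gw.re * P₁ + 4 * ‖gw‖ ^ 2 * P₁ ^ 2) * P₂) := by
    rw [htr4, hdiag 0, hdiag 1, hdiag 2, hdiag 3, hV0, hV1, hV2, hV3]
    linarith [hvar1, hvar2]
  have htrnn : 0 ≤ C.trace := by
    rw [htr4]
    have h0 : ∀ i, 0 ≤ C i i := fun i => (hdiag i).symm ▸ variance_nonneg (V i) ℙ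
    linarith [h0 0, h0 1, h0 2, h0 3]
  refine hdet_tr.trans ?_
  apply pow_le_pow_left₀ (by linarith)
  linarith
end
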